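/- If u and v are distinct nodes of a finite rooted tree such that the edge into u and the edge into v are both '0-annotated', and from each node there is a path of strictly decreasing ('non-0-annotated') edges to some leaf, then the strictly-decreasing paths chosen from u and from v to leaves are vertex-disjoint whenever neither of u, v is an ancestor of the other along those paths; consequently, the number of 0-annotated edges in such a tree is at most the number of leaves. -/
import Mathlib


/-- In a finite rooted tree where every node reaches a leaf by a path of non-0
annotated edges, and no non-0 annotation repeats along a root-to-leaf path, the
number of 0-annotated edges is at most the number of leaves. -/
theorem zero_edges_le_leaves {V : Type*} [Fintype V]
    (root : V) (parent : V → V)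
    (hroot : parent root = root)
    (hacc : ∀ v : V, ∃ k : ℕ, parent^[k] v = root)
    (ann : V → ℕ)
    (hpath : ∀ v : V, ∃ l : V,
        Relation.ReflTransGen (fun a b => b ≠ root ∧ parent b = a ∧ ann b ≠ 0) v l ∧
        ∀ u, ¬ (u ≠ root ∧ parent u = l))
    (hnorepeat : ∀ u v : V, u ≠ v →
        Relation.ReflTransGen (fun a b => b ≠ root ∧ parent b = a) u v →
        u ≠ root → ann u ≠ 0 → ann u ≠ ann v) :
    {v : V | v ≠ root ∧ ann v = 0}.ncard ≤
      {l : V | ∀ u, ¬ (u ≠ root ∧ parent u = l)}.ncard := by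
  classical
  have key : ∀ v l : V,
      Relation.ReflTransGen (fun a b => b ≠ root ∧ parent b = a ∧ ann b ≠ 0) v l →
      ∃ k : ℕ, parent^[k] l = v ∧ ∀ i < k, ann (parent^[i] l) ≠ 0 := by
    intro v l h
    induction h with
    | refl => exact ⟨0, rfl, fun i hi => absurd hi (Nat.not_lt_zero i)⟩
    | tail hvm hml ih =>
      obtain ⟨k, hk, hall⟩ := ih
      obtain ⟨hne, hpar, hann⟩ := hml
      refine ⟨k + 1, ?_, ?_⟩
      · rw [Function.iterate_succ_apply, hpar, hk]
      · intro i hi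
        cases i with
        | zero => simpa using hann
        | succ j =>
          rw [Function.iterate_succ_apply, hpar]
          exact hall j (by omega)
  choose f hf hleaf using hpath
  have hsub : f '' {v : V | v ≠ root ∧ ann v = 0} ⊆
      {l : V | ∀ u, ¬ (u ≠ root ∧ parent u = l)} := by
    rintro _ ⟨v, hv, rfl⟩
    exact hleaf v
  have hinj : Set.InjOn f {v : V | v ≠ root ∧ ann v = 0} := by
    intro u hu v hv heq
    by_contra hne
    obtain ⟨j, hj, hja⟩ := key u (f u) (hf u)
    obtain ⟨k, hk, hka⟩ := key v (f v) (hf v)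
    rw [heq] at hj hja
    have hjk : j ≠ k := by
      intro h; rw [h, hk] at hj; exact hne hj.symm
    rcases lt_or_gt_of_ne hjk with h | h
    · exact hka j h (by rw [hj]; exact hu.2)
    · exact hja k h (by rw [hk]; exact hv.2)
  calc {v : V | v ≠ root ∧ ann v = 0}.ncard
      = (f '' {v : V | v ≠ root ∧ ann v = 0}).ncard :=
        (Set.ncard_image_of_injOn hinj).symm
    _ ≤ _ := Set.ncard_le_ncard hsub (Set.toFinite _)
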